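/- arXiv:1903.09739 — 2 statements merged into one kernel-verified Lean document; each statement's English description precedes it below -/
import Mathlib

section
/- For all s > 0, u > 0 and α > 2, ∫_0^∞ s/(s + (u + r)^{α/2}) dr = u · ℓ(s·u^{−α/2}, 2/α). -/
open MeasureTheory Real Set

/-- `sinc z = sin(πz)/(πz)`. -/
noncomputable def sinc (z : ℝ) : ℝ := Real.sin (π * z) / (π * z)

/-- `ℓ(y,z) = y^z/sinc(z) − ∫_0^1 y/(y + t^{1/z}) dt` (Eqn. (10) of the paper). -/
noncomputable def ell (y z : ℝ) : ℝ :=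
  y ^ z / _root_.sinc z - ∫ t in (0 : ℝ)..1, y / (y + t ^ (1 / z))


lemma beta_refl {b : ℝ} (hb : 0 < b) (hb1 : b < 1) :
    ∫ x in (0:ℝ)..1, x ^ (-b) * (1 - x) ^ (b - 1) = π / Real.sin (π * b) := by
  have key : Complex.betaIntegral (1 - b) b
      = ((∫ x in (0:ℝ)..1, x ^ (-b) * (1 - x) ^ (b - 1) : ℝ) : ℂ) := by
    rw [Complex.betaIntegral, ← intervalIntegral.integral_ofReal]
    refine intervalIntegral.integral_congr fun x hx => ?_
    rw [Set.uIcc_of_le (by norm_num : (0:ℝ) ≤ 1)] at hx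
    obtain ⟨hx0, hx1⟩ := hx
    rw [Complex.ofReal_mul, Complex.ofReal_cpow hx0, Complex.ofReal_cpow (by linarith)]
    push_cast
    ring_nf
  have h2 : Complex.Gamma (1 - b) * Complex.Gamma b
      = Complex.Gamma ((1 - b) + b) * Complex.betaIntegral (1 - b) b :=
    Complex.Gamma_mul_Gamma_eq_betaIntegral (by simp; exact hb1) (by simpa using hb)
  rw [show ((1:ℂ) - b) + b = 1 by ring, Complex.Gamma_one, one_mul] at h2
  have h3 : Complex.Gamma (1 - b) * Complex.Gamma b
      = ((Real.Gamma (1 - b) * Real.Gamma b : ℝ) : ℂ) := by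
    push_cast [← Complex.Gamma_ofReal]
    norm_num
  have h4 : Real.Gamma b * Real.Gamma (1 - b) = π / Real.sin (π * b) :=
    Real.Gamma_mul_Gamma_one_sub b
  have := h2.symm.trans h3
  rw [key] at this
  rw [Complex.ofReal_inj.mp this, mul_comm]
  exact h4

lemma l2 {p : ℝ} (hp : 1 < p) :
    ∫ x in Ioi (0:ℝ), (1 + x ^ p)⁻¹ = π / (p * Real.sin (π / p)) := by
  have hp0 : 0 < p := by linarith
  set f : ℝ → ℝ := fun x => (1 + x ^ p)⁻¹ with hf
  set f' : ℝ → ℝ := fun x => -(p * x ^ (p - 1)) / (1 + x ^ p) ^ 2 with hf'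
  have hApos : ∀ x : ℝ, 0 < x → 0 < 1 + x ^ p := fun x hx => by
    have := Real.rpow_pos_of_pos hx p; linarith
  have hderiv : ∀ x ∈ Ioi (0:ℝ), HasDerivWithinAt f (f' x) (Ioi 0) x := by
    intro x hx
    have h1 : HasDerivAt (fun y : ℝ => 1 + y ^ p) (p * x ^ (p - 1)) x := by
      simpa using (Real.hasDerivAt_rpow_const (p := p) (Or.inl (ne_of_gt hx))).const_add 1
    have h2 := h1.inv (ne_of_gt (hApos x hx))
    simpa [hf, hf', neg_div, Pi.inv_def] using h2.hasDerivWithinAt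
  have hinj : InjOn f (Ioi 0) := by
    have : StrictAntiOn f (Ioi 0) := by
      intro x hx y hy hxy
      have h1 : x ^ p < y ^ p := Real.rpow_lt_rpow (le_of_lt hx) hxy hp0
      exact inv_strictAnti₀ (hApos x hx) (by linarith)
    exact this.injOn
  have himg : f '' Ioi 0 = Ioo 0 1 := by
    ext t
    constructor
    · rintro ⟨x, hx, rfl⟩
      have h1 : 0 < x ^ p := Real.rpow_pos_of_pos hx p
      exact ⟨inv_pos.mpr (hApos x hx), by rw [inv_lt_one_iff₀]; right; linarith⟩
    · rintro ⟨ht0, ht1⟩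
      refine ⟨((1 - t) / t) ^ (1 / p), Real.rpow_pos_of_pos (div_pos (by linarith) ht0) _, ?_⟩
      have hq : (((1 - t) / t) ^ (1 / p)) ^ p = (1 - t) / t := by
        rw [one_div, Real.rpow_inv_rpow (le_of_lt (div_pos (by linarith) ht0)) hp0.ne']
      show (1 + (((1 - t) / t) ^ (1 / p)) ^ p)⁻¹ = t
      rw [hq]
      have : 1 + (1 - t) / t = t⁻¹ := by field_simp; ring
      rw [this, inv_inv]
  have key := integral_image_eq_integral_abs_deriv_smul measurableSet_Ioi hderiv hinj
    (fun t => p⁻¹ * (t ^ (-(1/p)) * (1 - t) ^ (1/p - 1)))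
  rw [himg] at key
  have rhs : ∫ x in Ioi (0:ℝ),
      |f' x| • (p⁻¹ * ((f x) ^ (-(1/p)) * (1 - f x) ^ (1/p - 1)))
      = ∫ x in Ioi (0:ℝ), (1 + x ^ p)⁻¹ := by
    refine setIntegral_congr_fun measurableSet_Ioi fun x hx => ?_
    have hx0 : 0 < x := hx
    have hA := hApos x hx0
    have hxp : 0 < x ^ p := Real.rpow_pos_of_pos hx0 p
    have h1 : |f' x| = p * x ^ (p - 1) / (1 + x ^ p) ^ 2 := by
      rw [hf', abs_div, abs_neg, abs_of_nonneg (by positivity), abs_of_nonneg (by positivity)]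
    have h2 : (1 : ℝ) - f x = x ^ p / (1 + x ^ p) := by
      simp only [hf]
      field_simp
      ring
    have h3 : (f x) ^ (-(1/p)) = (1 + x ^ p) ^ (1/p) := by
      show ((1 + x ^ p)⁻¹ : ℝ) ^ (-(1/p)) = _
      rw [← Real.rpow_neg_one (1 + x ^ p), ← Real.rpow_mul hA.le]
      norm_num
    have h4 : (x ^ p / (1 + x ^ p)) ^ (1/p - 1)
        = x ^ (1 - p) * (1 + x ^ p) ^ (1 - 1/p) := by
      rw [Real.div_rpow hxp.le hA.le, div_eq_mul_inv, ← Real.rpow_neg hA.le,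
        ← Real.rpow_mul hx0.le]
      rw [show p * (1/p - 1) = 1 - p by rw [mul_sub, mul_one_div, div_self hp0.ne', mul_one]]
      rw [show -(1/p - 1) = 1 - 1/p by ring]
    rw [smul_eq_mul, h1, h2, h3, h4]
    rw [show ((1:ℝ) + x ^ p) ^ 2 = (1 + x^p) ^ (2:ℝ) by rw [Real.rpow_two]]
    rw [show (p : ℝ) * x ^ (p-1) / (1 + x^p) ^ (2:ℝ) = p * x ^ (p-1) * ((1+x^p) ^ (2:ℝ))⁻¹ by ring]
    rw [← Real.rpow_neg hA.le]
    have e1 : (1+x^p) ^ (-(2:ℝ)) * (1+x^p) ^ (1/p) * (1+x^p) ^ (1 - 1/p) = (1+x^p)⁻¹ := by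
      rw [← Real.rpow_add hA, ← Real.rpow_add hA, ← Real.rpow_neg_one]
      norm_num
    have e2 : x ^ (p - 1) * x ^ (1 - p) = 1 := by
      rw [← Real.rpow_add hx0]; norm_num
    calc p * x ^ (p-1) * ((1+x^p) ^ (-(2:ℝ))) * (p⁻¹ * ((1+x^p) ^ (1/p) * (x ^ (1-p) * (1+x^p) ^ (1 - 1/p))))
        = (p * p⁻¹) * (x ^ (p-1) * x ^ (1-p)) *
          ((1+x^p) ^ (-(2:ℝ)) * (1+x^p) ^ (1/p) * (1+x^p) ^ (1 - 1/p)) := by ring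
      _ = (1 + x ^ p)⁻¹ := by
          rw [e1, e2, mul_inv_cancel₀ hp0.ne', mul_one, one_mul]
  show ∫ x in Ioi (0:ℝ), (1 + x ^ p)⁻¹ = _
  rw [← rhs, ← key, ← MeasureTheory.integral_Ioc_eq_integral_Ioo,
    ← intervalIntegral.integral_of_le zero_le_one, intervalIntegral.integral_const_mul,
    beta_refl (by positivity) (by rw [div_lt_one hp0]; exact hp), mul_one_div,
    inv_mul_eq_div, div_div, mul_comm (Real.sin (π/p)) p]

lemma cont_on {s p : ℝ} (hs : 0 < s) (hp0 : 0 < p) :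
    ContinuousOn (fun x : ℝ => s / (s + x ^ p)) (Ici 0) := by
  have hrp : Continuous fun x : ℝ => x ^ p :=
    continuous_iff_continuousAt.mpr fun x => Real.continuousAt_rpow_const x p (Or.inr hp0.le)
  refine ContinuousOn.div continuousOn_const (by fun_prop) fun x hx => ?_
  have := Real.rpow_nonneg (mem_Ici.mp hx) p
  positivity

lemma l3a {s p : ℝ} (hs : 0 < s) (hp : 1 < p) :
    IntegrableOn (fun x : ℝ => s / (s + x ^ p)) (Ioi 0) := by
  have hp0 : 0 < p := by linarith
  rw [← Ioc_union_Ioi_eq_Ioi (zero_le_one' ℝ)]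
  refine IntegrableOn.union ?_ ?_
  · exact (((cont_on hs hp0).mono (Icc_subset_Ici_self)).integrableOn_Icc).mono_set
      Ioc_subset_Icc_self
  · refine Integrable.mono' ((integrableOn_Ioi_rpow_of_lt (by linarith : -p < -1)
        one_pos).const_mul s)
      (((cont_on hs hp0).mono fun x (hx : x ∈ Ioi (1:ℝ)) => mem_Ici.mpr (le_of_lt (lt_trans one_pos (mem_Ioi.mp hx)))
        ).aestronglyMeasurable measurableSet_Ioi) ?_
    refine (ae_restrict_iff' measurableSet_Ioi).mpr (ae_of_all _ fun x hx => ?_)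
    have hx1 : (1:ℝ) < x := hx
    have hx0 : (0:ℝ) < x := by linarith
    have hxp : 0 < x ^ p := Real.rpow_pos_of_pos hx0 p
    have hb : s / (s + x ^ p) ≤ s * x ^ (-p) := by
      rw [Real.rpow_neg hx0.le, ← div_eq_mul_inv]
      exact div_le_div_of_nonneg_left hs.le hxp (by linarith)
    rw [Real.norm_eq_abs, abs_of_nonneg (by positivity)]
    exact hb

lemma l3b {s p : ℝ} (hs : 0 < s) (hp : 1 < p) :
    ∫ x in Ioi (0:ℝ), s / (s + x ^ p) = s ^ (1/p) * (π / (p * Real.sin (π / p))) := by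
  have hp0 : 0 < p := by linarith
  set c : ℝ := s ^ (1/p) with hc
  have hcpos : 0 < c := Real.rpow_pos_of_pos hs _
  have hcp : c ^ p = s := by
    rw [hc, one_div, Real.rpow_inv_rpow hs.le hp0.ne']
  have step : ∀ x ∈ Ioi (0:ℝ), s / (s + x ^ p) = (1 + (c⁻¹ * x) ^ p)⁻¹ := by
    intro x hx
    have hx0 : (0:ℝ) < x := hx
    have hxp : 0 < x ^ p := Real.rpow_pos_of_pos hx0 p
    rw [Real.mul_rpow (by positivity) hx0.le, Real.inv_rpow hcpos.le, hcp]
    rw [inv_eq_one_div, div_eq_div_iff (by positivity) (by positivity)]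
    field_simp
  rw [setIntegral_congr_fun measurableSet_Ioi step,
    MeasureTheory.integral_comp_mul_left_Ioi (fun y => (1 + y ^ p)⁻¹) 0 (inv_pos.mpr hcpos),
    mul_zero, inv_inv, smul_eq_mul, l2 hp]

/-- For all `s > 0`, `u > 0` and `α > 2`,
`∫_0^∞ s/(s + (u + r)^{α/2}) dr = u · ℓ(s·u^{−α/2}, 2/α)`. -/
theorem stmt_4 (s u α : ℝ) (hs : 0 < s) (hu : 0 < u) (hα : 2 < α) :
    ∫ r in Set.Ioi (0 : ℝ), s / (s + (u + r) ^ (α / 2))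
      = u * ell (s * u ^ (-(α / 2))) (2 / α) := by
  set p : ℝ := α / 2 with hpdef
  have hp : 1 < p := by rw [hpdef]; linarith
  have hp0 : 0 < p := by linarith
  have hα0 : 0 < α := by linarith
  set F : ℝ → ℝ := fun x => s / (s + x ^ p) with hF
  have shift : ∫ x in Ioi u, F x = ∫ r in Ioi (0:ℝ), F (u + r) := by
    have h1 : ∀ r ∈ Ioi (0:ℝ),
        HasDerivWithinAt (fun r : ℝ => u + r) ((fun _ : ℝ => (1:ℝ)) r) (Ioi 0) r :=
      fun r _ => ((hasDerivAt_id r).const_add u).hasDerivWithinAt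
    have h2 : InjOn (fun r : ℝ => u + r) (Ioi 0) := (add_right_injective u).injOn
    have h3 := integral_image_eq_integral_abs_deriv_smul measurableSet_Ioi h1 h2 F
    rw [Set.image_const_add_Ioi, add_zero] at h3
    simpa using h3
  have hInt : IntegrableOn F (Ioi 0) := l3a hs hp
  have hsplit : (∫ x in Ioc 0 u, F x) + ∫ x in Ioi u, F x = ∫ x in Ioi 0, F x := by
    rw [← setIntegral_union (Ioc_disjoint_Ioi le_rfl) measurableSet_Ioi
      (hInt.mono_set Ioc_subset_Ioi_self) (hInt.mono_set (Ioi_subset_Ioi hu.le)),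
      Ioc_union_Ioi_eq_Ioi hu.le]
  have hval : ∫ x in Ioi (0:ℝ), F x = s ^ (1/p) * (π / (p * Real.sin (π / p))) := l3b hs hp
  have hθeq : π / p = π * (2 / α) := by
    rw [hpdef, div_div_eq_mul_div, mul_div_assoc]
  have hsinpos : 0 < Real.sin (π / p) :=
    Real.sin_pos_of_pos_of_lt_pi (by positivity) (div_lt_self pi_pos hp)
  have h1z : 1 / (2 / α) = p := by rw [one_div_div]
  have hz : (2:ℝ) / α = 1 / p := by rw [hpdef, one_div_div]
  have hy : (s * u ^ (-p)) ^ (1/p) = s ^ (1/p) * u⁻¹ := by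
    rw [Real.mul_rpow hs.le (Real.rpow_nonneg hu.le _), ← Real.rpow_mul hu.le,
      show -p * (1/p) = -1 by field_simp, Real.rpow_neg_one]
  have hIoc : (∫ t in (0:ℝ)..1, s * u ^ (-p) / (s * u ^ (-p) + t ^ p))
      = u⁻¹ * ∫ x in Ioc 0 u, F x := by
    have hup : (0:ℝ) < u ^ p := Real.rpow_pos_of_pos hu p
    have congr1 : EqOn (fun t : ℝ => s * u ^ (-p) / (s * u ^ (-p) + t ^ p))
        (fun t : ℝ => F (u * t)) (uIcc 0 1) := by
      intro t ht
      rw [Set.uIcc_of_le (zero_le_one' ℝ)] at ht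
      have ht0 : 0 ≤ t := ht.1
      have htp : 0 ≤ t ^ p := Real.rpow_nonneg ht0 p
      show s * u ^ (-p) / (s * u ^ (-p) + t ^ p) = s / (s + (u * t) ^ p)
      rw [Real.mul_rpow hu.le ht0, Real.rpow_neg hu.le]
      rw [div_eq_div_iff (by positivity) (by positivity)]
      linear_combination (s * t ^ p) * inv_mul_cancel₀ hup.ne'
    rw [intervalIntegral.integral_congr congr1]
    have h5 := intervalIntegral.smul_integral_comp_mul_left F (a := 0) (b := 1) u
    rw [mul_zero, mul_one, smul_eq_mul] at h5
    rw [← intervalIntegral.integral_of_le hu.le, ← h5, ← mul_assoc,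
      inv_mul_cancel₀ hu.ne', one_mul]
  have hIu : ∫ x in Ioi u, F x = (∫ x in Ioi 0, F x) - ∫ x in Ioc 0 u, F x := by
    linarith [hsplit]
  calc ∫ r in Ioi (0:ℝ), s / (s + (u + r) ^ p)
      = ∫ x in Ioi u, F x := shift.symm
    _ = (∫ x in Ioi 0, F x) - ∫ x in Ioc 0 u, F x := hIu
    _ = u * ell (s * u ^ (-p)) (2 / α) := by
        rw [hval, ell, _root_.sinc, h1z, hz, hy, hIoc, mul_one_div]
        field_simp
end

section
/- Let K ≥ 1 be an integer, α > 2 and λ̃ > 0. For each k ∈ {1,…,K}, let Y_k be a Gamma(k, πλ̃) random variable and H_k an exponential random variable with rate 1, such that H_k is independent of Y_k and the K pairs (H_k, Y_k) are mutually independent. Then for every y ≥ 0, ℙ[∑_{k=1}^K H_k · Y_k^{−α/2} ≥ y] ≤ 1 − ∏_{k=1}^K (1 − 𝔼[exp(−(2k·y/(K(K+1))) · Y_k^{α/2})]). -/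
open MeasureTheory ProbabilityTheory Real

lemma gamma_Iic_zero (a r : ℝ) : gammaMeasure a r (Set.Iic 0) = 0 := by
  rw [gammaMeasure, withDensity_apply _ measurableSet_Iic,
    setLIntegral_congr (Iio_ae_eq_Iic (μ := volume) (a := (0:ℝ))).symm]
  exact lintegral_gammaPDF_of_nonpos le_rfl

lemma exp_Iio (v : ℝ) (hv : 0 ≤ v) :
    expMeasure 1 (Set.Iio v) = ENNReal.ofReal (1 - Real.exp (-v)) := by
  have h1 : IsProbabilityMeasure (expMeasure 1) := isProbabilityMeasure_expMeasure one_pos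
  have hs : expMeasure 1 {v} = 0 := by
    rw [expMeasure, gammaMeasure, withDensity_apply _ (measurableSet_singleton v)]
    simp [lintegral_singleton]
  have h2 : expMeasure 1 (Set.Iio v) = expMeasure 1 (Set.Iic v) :=
    measure_congr (Iio_ae_eq_Iic' hs)
  rw [h2]
  have hc := cdf_expMeasure_eq one_pos v
  rw [cdf_eq_real, measureReal_def] at hc
  rw [← ENNReal.ofReal_toReal (measure_ne_top _ (Set.Iic v)), hc]
  simp [hv]

lemma gauss_sum (n : ℕ) : (∑ i ∈ Finset.range n, (i + 1)) * 2 = n * (n + 1) := by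
  induction n with
  | zero => simp
  | succ m ih => rw [Finset.sum_range_succ, add_mul, ih]; ring

lemma key_aux {Ω : Type*} [MeasurableSpace Ω] (μ : Measure Ω) [IsProbabilityMeasure μ]
    (H Y : Ω → ℝ) (hH : Measurable H) (hY : Measurable Y) (a r : ℝ) (ha : 0 < a) (hr : 0 < r)
    (hYlaw : μ.map Y = gammaMeasure a r) (hHlaw : μ.map H = expMeasure 1)
    (hind : IndepFun H Y μ) (c t : ℝ) (hc : 0 < c) (ht : 0 ≤ t) :
    (μ {ω | H ω * Y ω ^ (-c) < t}).toReal = 1 - ∫ ω, Real.exp (-t * Y ω ^ c) ∂μ := by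
  haveI hνprob : IsProbabilityMeasure (gammaMeasure a r) := isProbabilityMeasure_gammaMeasure ha hr
  haveI hEprob : IsProbabilityMeasure (expMeasure 1) := isProbabilityMeasure_expMeasure one_pos
  have hνpos : ∀ᵐ x ∂(gammaMeasure a r), 0 < x := by
    rw [ae_iff]
    have : {x : ℝ | ¬ 0 < x} = Set.Iic 0 := by ext x; simp
    rw [this]; exact gamma_Iic_zero a r
  have hYpos : ∀ᵐ ω ∂μ, 0 < Y ω := by
    rw [ae_iff]
    have : {ω | ¬ 0 < Y ω} = Y ⁻¹' (Set.Iic 0) := by ext ω; simp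
    rw [this, ← Measure.map_apply hY measurableSet_Iic, hYlaw]
    exact gamma_Iic_zero a r
  have hset : μ {ω | H ω * Y ω ^ (-c) < t} = μ {ω | H ω < t * Y ω ^ c} := by
    apply measure_congr
    filter_upwards [hYpos] with ω hω
    have hpow : 0 < Y ω ^ c := rpow_pos_of_pos hω c
    show (H ω * Y ω ^ (-c) < t) = (H ω < t * Y ω ^ c)
    rw [eq_iff_iff, rpow_neg hω.le, ← div_eq_mul_inv, div_lt_iff₀ hpow]
  have hmeas_exp : Measurable fun x : ℝ => Real.exp (-(t * x ^ c)) := by measurability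
  have hmap : μ.map (fun ω => (Y ω, H ω)) = (gammaMeasure a r).prod (expMeasure 1) := by
    rw [← hYlaw, ← hHlaw]
    exact (indepFun_iff_map_prod_eq_prod_map_map hY.aemeasurable hH.aemeasurable).1 hind.symm
  have hS : MeasurableSet {p : ℝ × ℝ | p.2 < t * p.1 ^ c} := by
    apply measurableSet_lt measurable_snd
    measurability
  have hjoint : μ {ω | H ω < t * Y ω ^ c}
      = ∫⁻ x, expMeasure 1 (Set.Iio (t * x ^ c)) ∂(gammaMeasure a r) := by
    have h1 : {ω | H ω < t * Y ω ^ c}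
        = (fun ω => (Y ω, H ω)) ⁻¹' {p : ℝ × ℝ | p.2 < t * p.1 ^ c} := rfl
    rw [h1, ← Measure.map_apply ((hY.prodMk hH)) hS, hmap, Measure.prod_apply hS]
    rfl
  have hlint : ∫⁻ x, expMeasure 1 (Set.Iio (t * x ^ c)) ∂(gammaMeasure a r)
      = ∫⁻ x, ENNReal.ofReal (1 - Real.exp (-(t * x ^ c))) ∂(gammaMeasure a r) := by
    apply lintegral_congr_ae
    filter_upwards [hνpos] with x hx
    exact exp_Iio _ (mul_nonneg ht (rpow_pos_of_pos hx c).le)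
  have hnn : 0 ≤ᵐ[gammaMeasure a r] fun x : ℝ => 1 - Real.exp (-(t * x ^ c)) := by
    filter_upwards [hνpos] with x hx
    have : Real.exp (-(t * x ^ c)) ≤ 1 := by
      rw [Real.exp_le_one_iff]
      exact neg_nonpos.2 (mul_nonneg ht (rpow_pos_of_pos hx c).le)
    simp only [Pi.zero_apply]; linarith
  have hint : Integrable (fun x : ℝ => Real.exp (-(t * x ^ c))) (gammaMeasure a r) := by
    refine Integrable.mono' (integrable_const 1) hmeas_exp.aestronglyMeasurable ?_
    filter_upwards [hνpos] with x hx
    rw [Real.norm_eq_abs, abs_of_pos (Real.exp_pos _), Real.exp_le_one_iff]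
    exact neg_nonpos.2 (mul_nonneg ht (rpow_pos_of_pos hx c).le)
  have hsub : ∫ x, (1 - Real.exp (-(t * x ^ c))) ∂(gammaMeasure a r)
      = 1 - ∫ x, Real.exp (-(t * x ^ c)) ∂(gammaMeasure a r) := by
    rw [integral_sub (integrable_const 1) hint, integral_const, probReal_univ, smul_eq_mul, mul_one]
  have hchange : ∫ x, Real.exp (-(t * x ^ c)) ∂(gammaMeasure a r) = ∫ ω, Real.exp (-t * Y ω ^ c) ∂μ := by
    rw [← hYlaw, integral_map hY.aemeasurable hmeas_exp.aestronglyMeasurable]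
    congr 1; ext ω; rw [neg_mul]
  rw [hset, hjoint, hlint,
    ← integral_eq_lintegral_of_nonneg_ae hnn
      (by measurability : Measurable fun x : ℝ => 1 - Real.exp (-(t * x ^ c))).aestronglyMeasurable,
    hsub, hchange]

/-- Upper bound on the tail of the `K`-th truncated shot signal process
(Theorem 1(iii), Eqn. (11) of the paper): if `Y k ~ Gamma(k, πλ̃)`, `H k ~ Exp(1)`,
`H k` is independent of `Y k` and the `K` pairs `(H k, Y k)` are mutually independent,
then for every `y ≥ 0`,
`ℙ[∑ H k Y k^{−α/2} ≥ y] ≤ 1 − ∏ (1 − 𝔼[exp(−(2k y/(K(K+1))) Y k^{α/2})])`. -/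
theorem stmt_8 {Ω : Type*} [MeasurableSpace Ω] (μ : Measure Ω) [IsProbabilityMeasure μ]
    (K : ℕ) (hK : 1 ≤ K) (α lam : ℝ) (hα : 2 < α) (hlam : 0 < lam)
    (Y H : Fin K → Ω → ℝ)
    (hYmeas : ∀ k, Measurable (Y k)) (hHmeas : ∀ k, Measurable (H k))
    (hYgamma : ∀ k : Fin K, μ.map (Y k) = gammaMeasure ((k : ℕ) + 1) (π * lam))
    (hHexp : ∀ k : Fin K, μ.map (H k) = expMeasure 1)
    (hHYindep : ∀ k : Fin K, IndepFun (H k) (Y k) μ)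
    (hpairs : iIndepFun (fun k ω => (H k ω, Y k ω)) μ)
    (y : ℝ) (hy : 0 ≤ y) :
    (μ {ω | y ≤ ∑ k : Fin K, H k ω * (Y k ω) ^ (-(α / 2))}).toReal
      ≤ 1 - ∏ k : Fin K,
          (1 - ∫ ω, Real.exp (-(2 * ((k : ℕ) + 1) * y / (K * (K + 1))) * (Y k ω) ^ (α / 2)) ∂μ)
      := by
  have hKpos : (0:ℝ) < K := by exact_mod_cast Nat.lt_of_lt_of_le Nat.zero_lt_one hK
  have hcpos : 0 < α / 2 := by linarith
  set t : Fin K → ℝ := fun k => 2 * ((k : ℕ) + 1) * y / (K * (K + 1)) with htdef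
  have htnn : ∀ k, 0 ≤ t k := by
    intro k
    apply div_nonneg (by positivity)
    positivity
  have hsum : ∑ k : Fin K, t k = y := by
    rw [← Finset.sum_div]
    rw [div_eq_iff (by positivity : (K : ℝ) * (K + 1) ≠ 0)]
    have hn : (∑ k : Fin K, (((k : ℕ) : ℝ) + 1)) = K * (K + 1) / 2 := by
      have h1 : (∑ k : Fin K, (((k : ℕ) : ℝ) + 1)) = ((∑ k : Fin K, ((k : ℕ) + 1) : ℕ) : ℝ) := by
        push_cast
        exact Finset.sum_congr rfl fun k _ => by ring
      have h2 : (∑ k : Fin K, ((k : ℕ) + 1)) = ∑ i ∈ Finset.range K, (i + 1) := by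
        rw [Finset.sum_range fun i => i + 1]
      have h3 := gauss_sum K
      rw [h1, h2]
      field_simp
      exact_mod_cast h3
    calc ∑ k : Fin K, 2 * (((k : ℕ) : ℝ) + 1) * y
        = (∑ k : Fin K, (((k : ℕ) : ℝ) + 1)) * (2 * y) := by
          rw [Finset.sum_mul]; congr 1; ext k; ring
      _ = y * ((K : ℝ) * (K + 1)) := by rw [hn]; ring
  set A : Fin K → Set Ω := fun k => {ω | H k ω * (Y k ω) ^ (-(α / 2)) < t k} with hAdef
  have hSmeas : ∀ k : Fin K, MeasurableSet {p : ℝ × ℝ | p.1 * p.2 ^ (-(α / 2)) < t k} := by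
    intro k
    apply measurableSet_lt _ measurable_const
    measurability
  have hAmeas : ∀ k, MeasurableSet (A k) := fun k =>
    ((hHmeas k).prodMk (hYmeas k)) (hSmeas k)
  have hincl : {ω | y ≤ ∑ k : Fin K, H k ω * (Y k ω) ^ (-(α / 2))} ⊆ (⋂ k, A k)ᶜ := by
    intro ω hω hmem
    simp only [Set.mem_iInter] at hmem
    have : ∑ k : Fin K, H k ω * (Y k ω) ^ (-(α / 2)) < ∑ k : Fin K, t k := by
      apply Finset.sum_lt_sum_of_nonempty
      · haveI : Nonempty (Fin K) := Fin.pos_iff_nonempty.1 (Nat.lt_of_lt_of_le Nat.zero_lt_one hK)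
        exact Finset.univ_nonempty
      · exact fun k _ => hmem k
    rw [hsum] at this
    exact absurd hω (not_le.2 this)
  have hprod : μ (⋂ k, A k) = ∏ k : Fin K, μ (A k) := by
    apply hpairs.meas_iInter
    intro k
    exact ⟨{p : ℝ × ℝ | p.1 * p.2 ^ (-(α / 2)) < t k}, hSmeas k, rfl⟩
  have hcompl : μ ((⋂ k, A k)ᶜ) = 1 - ∏ k : Fin K, μ (A k) := by
    rw [prob_compl_eq_one_sub (MeasurableSet.iInter hAmeas), hprod]
  have hle1 : ∏ k : Fin K, μ (A k) ≤ 1 :=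
    Finset.prod_le_one' fun k _ => prob_le_one
  have step1 : (μ {ω | y ≤ ∑ k : Fin K, H k ω * (Y k ω) ^ (-(α / 2))}).toReal
      ≤ ((1:ENNReal) - ∏ k : Fin K, μ (A k)).toReal := by
    apply ENNReal.toReal_mono
    · exact (tsub_le_self.trans_lt (lt_of_le_of_lt le_rfl ENNReal.one_lt_top)).ne
    · exact (measure_mono hincl).trans_eq hcompl
  refine step1.trans_eq ?_
  rw [ENNReal.toReal_sub_of_le hle1 ENNReal.one_ne_top, ENNReal.toReal_one,
    ENNReal.toReal_prod]
  congr 1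
  apply Finset.prod_congr rfl
  intro k _
  have := key_aux μ (H k) (Y k) (hHmeas k) (hYmeas k) (((k : ℕ) : ℝ) + 1) (π * lam)
    (by positivity) (by positivity) (hYgamma k) (hHexp k) (hHYindep k) (α / 2) (t k)
    hcpos (htnn k)
  rw [this]
end
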